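/- Let S be a nontrivial subsemigroup of (ℚ,+), let u, v be (possibly countably infinite) index sets, and let B be a u × v rational matrix with finitely many nonzero entries per row. Then there is a v × v rational matrix C (finitely many nonzero entries per row) such that {x ∈ (S \ {0})^v : B x = 0} = {C y : y ∈ (S \ {0})^v} ∩ (S \ {0})^v. Consequently B is kernel partition regular over S if and only if C is image partition regular over S. -/

import Mathlib

open scoped BigOperators

/-- Matrix–vector product over ℚ, via `finsum`. -/
noncomputable def mulVecQ {u v : Type} (A : u → v → ℚ) (x : v → ℚ) : u → ℚ :=
  fun i => ∑ᶠ j, A i j * x j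

/-- `B` is kernel partition regular over `S`: for every finite colouring of
`S \ {0}` there is a monochromatic vector with entries in `S \ {0}` in the
kernel of `B`. -/
def KPRQ {u v : Type} (B : u → v → ℚ) (S : Set ℚ) : Prop :=
  ∀ (k : ℕ) (φ : ℚ → Fin k), ∃ x : v → ℚ,
    (∀ j, x j ∈ S \ {0}) ∧ (∀ i, mulVecQ B x i = 0) ∧
    (∀ j j', φ (x j) = φ (x j'))

/-- `C` is image partition regular over `S`: for every finite colouring of
`S \ {0}` there is `y` with entries in `S \ {0}` such that the entries of `C y`
are monochromatic elements of `S \ {0}`. -/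
def IPRQ {u v : Type} (C : u → v → ℚ) (S : Set ℚ) : Prop :=
  ∀ (k : ℕ) (φ : ℚ → Fin k), ∃ y : v → ℚ,
    (∀ j, y j ∈ S \ {0}) ∧ (∀ i, mulVecQ C y i ∈ S \ {0}) ∧
    (∀ i i', φ (mulVecQ C y i) = φ (mulVecQ C y i'))

/-- Pairing a finitely supported functional with a vector, as a finsum. -/
lemma finsum_pair {v : Type} (f : v →₀ ℚ) (x : v → ℚ) :
    ∑ᶠ j, f j * x j = Finsupp.linearCombination ℚ x f := by
  rw [Finsupp.linearCombination_apply, Finsupp.sum]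
  refine finsum_eq_sum_of_support_subset _ ?_
  intro j hj
  simp only [Function.mem_support] at hj
  simp only [Finset.coe_sort_coe, Finset.mem_coe, Finsupp.mem_support_iff]
  intro h
  exact hj (by rw [h, zero_mul])

theorem stmt4 (S : AddSubsemigroup ℚ) (hS : ∃ s ∈ S, s ≠ (0 : ℚ))
    {u v : Type} [Countable u] [Countable v]
    (B : u → v → ℚ) (hB : ∀ i, (Function.support (B i)).Finite) :
    ∃ C : v → v → ℚ,
      (∀ i, (Function.support (C i)).Finite) ∧
      ({x : v → ℚ | (∀ j, x j ∈ (S : Set ℚ) \ {0}) ∧ ∀ i, mulVecQ B x i = 0} =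
        {x : v → ℚ | ∃ y : v → ℚ, (∀ j, y j ∈ (S : Set ℚ) \ {0}) ∧ x = mulVecQ C y} ∩
          {x : v → ℚ | ∀ j, x j ∈ (S : Set ℚ) \ {0}}) ∧
      (KPRQ B (S : Set ℚ) ↔ IPRQ C (S : Set ℚ)) := by
  classical
  -- rows of `B` as finitely supported functions
  set r : u → (v →₀ ℚ) := fun i => Finsupp.ofSupportFinite (B i) (hB i) with hr
  have hrcoe : ∀ i, (r i : v → ℚ) = B i := fun i => Finsupp.ofSupportFinite_coe
  -- the span of the rows and a projection onto it
  set R : Submodule ℚ (v →₀ ℚ) := Submodule.span ℚ (Set.range r) with hR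
  obtain ⟨Q, hQ⟩ := R.exists_isCompl
  set p : (v →₀ ℚ) →ₗ[ℚ] (v →₀ ℚ) := R.subtype.comp (R.projectionOnto Q hQ) with hp
  have hpmem : ∀ f, p f ∈ R := fun f => (R.projectionOnto Q hQ f).2
  have hpfix : ∀ f ∈ R, p f = f := by
    intro f hf
    simp only [hp, LinearMap.comp_apply, Submodule.subtype_apply]
    rw [Submodule.projectionOnto_apply_left hQ ⟨f, hf⟩]
  -- the matrix `C`
  set g : v → (v →₀ ℚ) := fun i => Finsupp.single i 1 - p (Finsupp.single i 1) with hg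
  -- computation of `C x`
  have hCx : ∀ (x : v → ℚ) (i : v),
      mulVecQ (fun i j => g i j) x i = x i - Finsupp.linearCombination ℚ x (p (Finsupp.single i 1)) := by
    intro x i
    have : mulVecQ (fun i j => g i j) x i = ∑ᶠ j, g i j * x j := rfl
    rw [this, finsum_pair, hg]
    simp
  -- `B x = 0` iff every element of `R` annihilates `x`
  have hker : ∀ x : v → ℚ, (∀ i, mulVecQ B x i = 0) →
      ∀ f ∈ R, Finsupp.linearCombination ℚ x f = 0 := by
    intro x hx f hf
    have : R ≤ LinearMap.ker (Finsupp.linearCombination ℚ x) := by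
      rw [hR, Submodule.span_le]
      rintro _ ⟨i, rfl⟩
      simp only [SetLike.mem_coe, LinearMap.mem_ker]
      have := hx i
      simp only [mulVecQ] at this
      rw [← finsum_pair, hrcoe i]
      exact this
    exact this hf
  -- `C` fixes the kernel of `B`
  have hfix : ∀ x : v → ℚ, (∀ i, mulVecQ B x i = 0) →
      ∀ i, mulVecQ (fun i j => g i j) x i = x i := by
    intro x hx i
    rw [hCx x i, hker x hx _ (hpmem _), sub_zero]
  -- `B (C y) = 0` always
  have hBC : ∀ y : v → ℚ, ∀ k, mulVecQ B (mulVecQ (fun i j => g i j) y) k = 0 := by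
    intro y k
    have h1 : mulVecQ B (mulVecQ (fun i j => g i j) y) k
        = Finsupp.linearCombination ℚ (mulVecQ (fun i j => g i j) y) (r k) := by
      rw [mulVecQ, ← hrcoe k]
      exact finsum_pair _ _
    rw [h1]
    -- the linear functional `f ↦ ⟨f - p f, y⟩`
    set Φ : (v →₀ ℚ) →ₗ[ℚ] ℚ :=
      (Finsupp.linearCombination ℚ y).comp (LinearMap.id - p) with hΦ
    have h2 : Finsupp.linearCombination ℚ (mulVecQ (fun i j => g i j) y) = Φ := by
      refine Finsupp.lhom_ext fun a b => ?_
      have hsingle : (Finsupp.single a b : v →₀ ℚ) = b • Finsupp.single a (1:ℚ) := by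
        rw [Finsupp.smul_single, smul_eq_mul, mul_one]
      rw [hsingle, map_smul, map_smul]
      congr 1
      rw [Finsupp.linearCombination_single, one_smul, hCx y a]
      simp only [hΦ, LinearMap.comp_apply, LinearMap.sub_apply, LinearMap.id_apply, map_sub,
        Finsupp.linearCombination_single, one_smul]
    rw [h2]
    simp only [hΦ, LinearMap.comp_apply, LinearMap.sub_apply, LinearMap.id_apply, map_sub]
    rw [hpfix (r k) (Submodule.subset_span ⟨k, rfl⟩), sub_self]
  refine ⟨fun i j => g i j, fun i => (g i).finite_support, ?_, ?_⟩
  · -- set equality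
    ext x
    simp only [Set.mem_setOf_eq, Set.mem_inter_iff]
    constructor
    · rintro ⟨hxS, hxK⟩
      refine ⟨⟨x, hxS, ?_⟩, hxS⟩
      funext i
      exact (hfix x hxK i).symm
    · rintro ⟨⟨y, hyS, rfl⟩, hxS⟩
      exact ⟨hxS, hBC y⟩
  · -- partition regularity equivalence
    constructor
    · intro h k φ
      obtain ⟨x, hxS, hxK, hxmono⟩ := h k φ
      refine ⟨x, hxS, ?_, ?_⟩
      · intro i; rw [hfix x hxK i]; exact hxS i
      · intro i i'; rw [hfix x hxK i, hfix x hxK i']; exact hxmono i i'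
    · intro h k φ
      obtain ⟨y, hyS, hyS', hymono⟩ := h k φ
      exact ⟨mulVecQ (fun i j => g i j) y, hyS', hBC y, hymono⟩
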